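/- Let G be a finite group, k ≥ 1 an integer, and fix signs s_0,…,s_{k−1}, t_0,…,t_{k−1} ∈ {+,−}. On H = (ℂ^G)^{⊗k} let L_i^g (resp. T_i^g) act as L^g_{s_i} (resp. T^g_{t_i}) on the i-th tensor factor and as the identity elsewhere. Then the vertex operator A = (1/|G|) ∑_{g∈G} L_0^g L_1^g ⋯ L_{k−1}^g is an orthogonal projection (A² = A = A†), and the plaquette operator B = ∑ T_0^{g_0} T_1^{g_1} ⋯ T_{k−1}^{g_{k−1}}, summed over all tuples (g_0,…,g_{k−1}) ∈ G^k with g_{k−1} ⋯ g_1 g_0 = 1, is an orthogonal projection (B² = B = B†). -/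

import Mathlib

open Matrix Kronecker BigOperators

noncomputable section

variable {G : Type*} [Group G] [Fintype G] [DecidableEq G]

/-- `L^g_+ : |z⟩ ↦ |gz⟩` (left multiplication by `g`). -/
def Lp (g : G) : Matrix G G ℂ := Matrix.of fun x z => if x = g * z then 1 else 0

/-- `L^g_- : |z⟩ ↦ |z g⁻¹⟩` (right multiplication by `g⁻¹`). -/
def Lm (g : G) : Matrix G G ℂ := Matrix.of fun x z => if x = z * g⁻¹ then 1 else 0

/-- `T^g_+ = |g⟩⟨g|`. -/
def Tp (g : G) : Matrix G G ℂ := Matrix.of fun x z => if x = g ∧ z = g then 1 else 0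

/-- `T^g_- = |g⁻¹⟩⟨g⁻¹|`. -/
def Tm (g : G) : Matrix G G ℂ := Tp g⁻¹

/-- Signed `L` operator: `true` stands for `+`, `false` for `−`. -/
def Lsgn (s : Bool) (g : G) : Matrix G G ℂ := if s then Lp g else Lm g

/-- Signed `T` operator: `true` stands for `+`, `false` for `−`. -/
def Tsgn (s : Bool) (g : G) : Matrix G G ℂ := if s then Tp g else Tm g

/-- The operator acting as `A` on the `i`-th tensor factor of `(ℂ^G)^{⊗k}`
and as the identity on all other factors. -/
def factor {k : ℕ} (i : Fin k) (A : Matrix G G ℂ) : Matrix (Fin k → G) (Fin k → G) ℂ :=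
  Matrix.of fun x y => if ∀ j, j ≠ i → x j = y j then A (x i) (y i) else 0

/-- The partial matrix element `(1_H ⊗ ⟨ψ|) Z (1_H ⊗ |ψ⟩)` of an operator `Z` on `H ⊗ ℂ^R`. -/
def pme {H R : Type*} [Fintype R] (ψ : R → ℂ) (Z : Matrix (H × R) (H × R) ℂ) :
    Matrix H H ℂ :=
  Matrix.of fun x y => ∑ a : R, ∑ b : R, (starRingEnd ℂ) (ψ a) * Z (x, a) (y, b) * ψ b

/-! ### Auxiliary material -/

/-- The signed action `Φ s g : z ↦ g z` (for `+`) or `z ↦ z g⁻¹` (for `-`). -/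
def Phi (s : Bool) (g z : G) : G := if s then g * z else z * g⁻¹

lemma Lsgn_apply (s : Bool) (g x z : G) :
    Lsgn s g x z = if x = Phi s g z then 1 else 0 := by
  cases s <;> rfl

lemma Phi_mul (s : Bool) (g h z : G) : Phi s g (Phi s h z) = Phi s (g * h) z := by
  cases s <;> simp [Phi, mul_assoc]

lemma Phi_one (s : Bool) (z : G) : Phi s 1 z = z := by
  cases s <;> simp [Phi]

/-- The signed element `τ s g = g` (for `+`) or `g⁻¹` (for `-`). -/
def tau (s : Bool) (g : G) : G := if s then g else g⁻¹

lemma Tsgn_eq (s : Bool) (g : G) : Tsgn s g = Tp (tau s g) := by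
  cases s <;> rfl

/-- Key combinatorial lemma: a product of `factor`s along a duplicate-free list. -/
lemma factor_list_prod {k : ℕ} (M : Fin k → Matrix G G ℂ) :
    ∀ l : List (Fin k), l.Nodup →
      (l.map fun i => factor i (M i)).prod =
        Matrix.of fun x y =>
          if ∀ j, j ∉ l → x j = y j then (l.map fun i => M i (x i) (y i)).prod else 0 := by
  intro l
  induction l with
  | nil =>
    intro _
    ext x y
    simp [Matrix.one_apply, funext_iff]
  | cons i l ih =>
    intro hnd
    rw [List.nodup_cons] at hnd
    obtain ⟨hi, hl⟩ := hnd
    rw [List.map_cons, List.prod_cons, ih hl]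
    ext x y
    rw [Matrix.mul_apply]
    set Q : Matrix (Fin k → G) (Fin k → G) ℂ :=
      Matrix.of fun x y =>
        if ∀ j, j ∉ l → x j = y j then (l.map fun i => M i (x i) (y i)).prod else 0 with hQ
    have h1 : ∑ z : Fin k → G, factor i (M i) x z * Q z y =
        ∑ z ∈ Finset.univ.image (fun w : G => Function.update x i w),
          factor i (M i) x z * Q z y := by
      refine (Finset.sum_subset (Finset.subset_univ _) ?_).symm
      intro z _ hz
      have hne : ¬ ∀ j, j ≠ i → x j = z j := by
        intro hcond
        apply hz
        refine Finset.mem_image.2 ⟨z i, Finset.mem_univ _, ?_⟩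
        funext j
        by_cases hji : j = i
        · subst hji; simp
        · rw [Function.update_of_ne hji]
          exact hcond j hji
      simp [factor, hne]
    rw [h1, Finset.sum_image (fun a _ b _ h => Function.update_injective x i h)]
    have h2 : ∀ w : G, factor i (M i) x (Function.update x i w) = M i (x i) w := by
      intro w
      have : ∀ j, j ≠ i → x j = Function.update x i w j := by
        intro j hj; rw [Function.update_of_ne hj]
      simp only [factor, Matrix.of_apply, if_pos this, Function.update_self]
    have h3 : ∀ w : G, Q (Function.update x i w) y =
        if w = y i ∧ (∀ j, j ∉ i :: l → x j = y j)
          then (l.map fun j => M j (x j) (y j)).prod else 0 := by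
      intro w
      have hmap : (l.map fun j => M j (Function.update x i w j) (y j)).prod =
          (l.map fun j => M j (x j) (y j)).prod := by
        congr 1
        refine List.map_congr_left ?_
        intro j hj
        have hji : j ≠ i := fun h => hi (h ▸ hj)
        rw [Function.update_of_ne hji]
      have hcond : (∀ j, j ∉ l → Function.update x i w j = y j) ↔
          (w = y i ∧ ∀ j, j ∉ i :: l → x j = y j) := by
        constructor
        · intro h
          refine ⟨by simpa using h i hi, ?_⟩
          intro j hj
          have hji : j ≠ i := fun h' => hj (h' ▸ List.mem_cons_self)
          have hjl : j ∉ l := fun h' => hj (List.mem_cons_of_mem i h')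
          simpa [Function.update_of_ne hji] using h j hjl
        · rintro ⟨hw, h⟩ j hj
          by_cases hji : j = i
          · subst hji; simpa using hw
          · rw [Function.update_of_ne hji]
            exact h j (by simp [hji, hj])
      simp only [hQ, Matrix.of_apply, hmap]
      rw [if_congr hcond rfl rfl]
    simp only [h2, h3]
    simp only [Matrix.of_apply, List.map_cons, List.prod_cons, ite_and, mul_ite, mul_zero]
    rw [Finset.sum_ite_eq']
    simp [mul_ite]

lemma factor_finRange_prod {k : ℕ} (M : Fin k → Matrix G G ℂ) :
    ((List.finRange k).map fun i => factor i (M i)).prod =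
      Matrix.of fun x y => ∏ i, M i (x i) (y i) := by
  rw [factor_list_prod M _ (List.nodup_finRange k)]
  ext x y
  have : ∀ j : Fin k, j ∈ List.finRange k := List.mem_finRange
  simp [this, ← Fin.prod_univ_def]

/-- The unitary `W g = L^g_{s₀} ⊗ ⋯ ⊗ L^g_{s_{k-1}}`. -/
def Wmat {k : ℕ} (s : Fin k → Bool) (g : G) : Matrix (Fin k → G) (Fin k → G) ℂ :=
  Matrix.of fun x y => if x = fun i => Phi (s i) g (y i) then 1 else 0

lemma Wmat_eq {k : ℕ} (s : Fin k → Bool) (g : G) :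
    ((List.finRange k).map fun i => factor i (Lsgn (s i) g)).prod = Wmat s g := by
  rw [factor_finRange_prod]
  ext x y
  simp only [Matrix.of_apply, Wmat, Lsgn_apply, Finset.prod_boole]
  simp [funext_iff]

lemma Wmat_mul {k : ℕ} (s : Fin k → Bool) (g h : G) :
    Wmat (G := G) s g * Wmat s h = Wmat s (g * h) := by
  ext x y
  rw [Matrix.mul_apply]
  simp only [Wmat, Matrix.of_apply, mul_ite, mul_one, mul_zero]
  rw [Finset.sum_ite_eq' Finset.univ (fun i => Phi (s i) h (y i))
    (fun z => if x = fun i => Phi (s i) g (z i) then 1 else 0)]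
  have : (fun i => Phi (s i) g (Phi (s i) h (y i))) = fun i => Phi (s i) (g * h) (y i) :=
    funext fun i => Phi_mul _ _ _ _
  simp [this]

lemma Wmat_conjTranspose {k : ℕ} (s : Fin k → Bool) (g : G) :
    (Wmat (G := G) s g)ᴴ = Wmat s g⁻¹ := by
  ext x y
  simp only [Matrix.conjTranspose_apply, Wmat, Matrix.of_apply]
  have hiff : (y = fun i => Phi (s i) g (x i)) ↔ (x = fun i => Phi (s i) g⁻¹ (y i)) := by
    constructor
    · rintro rfl; funext i; rw [Phi_mul, inv_mul_cancel, Phi_one]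
    · rintro rfl; funext i; rw [Phi_mul, mul_inv_cancel, Phi_one]
  rw [apply_ite star, star_one, star_zero, if_congr hiff rfl rfl]

/-- The vertex operator `A = (1/|G|) ∑_g L₀^g ⋯ L_{k-1}^g` and the plaquette
operator `B = ∑_{g_{k-1}⋯g₁g₀=1} T₀^{g₀} ⋯ T_{k-1}^{g_{k-1}}` are orthogonal projections. -/
theorem statement12 (k : ℕ) (hk : 1 ≤ k) (s t : Fin k → Bool)
    (A B : Matrix (Fin k → G) (Fin k → G) ℂ)
    (hA : A = ((Fintype.card G : ℂ))⁻¹ •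
      ∑ g : G, ((List.finRange k).map (fun i => factor i (Lsgn (s i) g))).prod)
    (hB : B = ∑ a ∈ Finset.univ.filter
        (fun a : Fin k → G => (((List.finRange k).reverse).map a).prod = 1),
      ((List.finRange k).map (fun i => factor i (Tsgn (t i) (a i)))).prod) :
    A * A = A ∧ Aᴴ = A ∧ B * B = B ∧ Bᴴ = B := by
  have hcard : (Fintype.card G : ℂ) ≠ 0 := by
    exact_mod_cast Nat.cast_ne_zero.2 Fintype.card_ne_zero
  -- rewrite A
  have hA' : A = ((Fintype.card G : ℂ))⁻¹ • ∑ g : G, Wmat s g := by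
    rw [hA]; congr 1; exact Finset.sum_congr rfl fun g _ => Wmat_eq s g
  -- rewrite B as a diagonal matrix
  have hB' : B = Matrix.diagonal (fun x : Fin k → G =>
      if (((List.finRange k).reverse).map (fun i => tau (t i) (x i))).prod = 1
        then (1 : ℂ) else 0) := by
    rw [hB]
    ext x y
    rw [Matrix.sum_apply]
    have hterm : ∀ a : Fin k → G,
        (((List.finRange k).map fun i => factor i (Tsgn (t i) (a i))).prod) x y =
          if (a = fun i => tau (t i) (x i)) ∧ y = x then 1 else 0 := by
      intro a
      rw [factor_finRange_prod]
      simp only [Matrix.of_apply, Tsgn_eq, Tp, Finset.prod_boole]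
      congr 1
      · -- condition equivalence
        rw [eq_iff_iff]
        constructor
        · intro h
          have h1 : ∀ i, x i = tau (t i) (a i) := fun i => (h i (Finset.mem_univ i)).1
          have h2 : ∀ i, y i = tau (t i) (a i) := fun i => (h i (Finset.mem_univ i)).2
          constructor
          · funext i
            have := h1 i
            cases hti : t i <;> simp [tau, hti] at this ⊢ <;> simp [this]
          · funext i; rw [h2 i, ← h1 i]
        · rintro ⟨rfl, rfl⟩ i _
          constructor <;> (cases hti : t i <;> simp [tau, hti])
    simp only [hterm]
    by_cases hyx : y = x
    · subst hyx
      simp only [and_true]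
      rw [Finset.sum_ite_eq']
      simp [Matrix.diagonal, Finset.mem_filter]
    · simp [hyx, Matrix.diagonal_apply_ne' _ hyx]
  refine ⟨?_, ?_, ?_, ?_⟩
  · -- A * A = A
    rw [hA', Matrix.smul_mul, Matrix.mul_smul, smul_smul, Finset.sum_mul_sum]
    have hrow : ∀ g : G, ∑ h : G, Wmat (G := G) s g * Wmat s h = ∑ h : G, Wmat s h := by
      intro g
      exact Fintype.sum_bijective (fun h => g * h) (Group.mulLeft_bijective g) _ _
        fun h => Wmat_mul s g h
    simp only [hrow]
    rw [Finset.sum_const, Finset.card_univ, ← Nat.cast_smul_eq_nsmul ℂ, smul_smul]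
    congr 1
    field_simp
  · -- Aᴴ = A
    rw [hA', Matrix.conjTranspose_smul, Matrix.conjTranspose_sum]
    have h1 : star ((Fintype.card G : ℂ))⁻¹ = ((Fintype.card G : ℂ))⁻¹ := by
      simp
    rw [h1]
    congr 1
    exact Fintype.sum_bijective (fun g : G => g⁻¹) inv_involutive.bijective _ _
      fun g => Wmat_conjTranspose s g
  · -- B * B = B
    rw [hB', Matrix.diagonal_mul_diagonal]
    refine congrArg Matrix.diagonal (funext fun x => ?_)
    by_cases h : (((List.finRange k).map (fun i => tau (t i) (x i))).reverse).prod = 1 <;>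
      simp [List.map_reverse, h]
  · -- Bᴴ = B
    rw [hB', Matrix.diagonal_conjTranspose]
    refine congrArg Matrix.diagonal (funext fun x => ?_)
    by_cases h : (((List.finRange k).map (fun i => tau (t i) (x i))).reverse).prod = 1 <;>
      simp [List.map_reverse, h, Pi.star_apply]
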